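/- Let 𝔤 be a finite-dimensional real Lie algebra with an invariant inner product ⟨·,·⟩ (i.e. ⟨⁅z,x⁆,y⟩ + ⟨x,⁅z,y⁆⟩ = 0 for all x,y,z ∈ 𝔤). Let 𝔨 ⊆ 𝔤 be a Lie subalgebra and 𝔥 ⊆ 𝔨 an ideal of 𝔨; let 𝔪₀ be the orthogonal complement of 𝔥 in 𝔨, 𝔪′ the orthogonal complement of 𝔨 in 𝔤, and 𝔪 = 𝔪₀ ⊕ 𝔪′ the orthogonal complement of 𝔥 in 𝔤. Assume 𝔪′ is a nonzero irreducible 𝔨-module under the adjoint action, and assume 𝔥 is not an ideal of 𝔤. Then 𝔪₀ is exactly the fixed-point set of the adjoint action of 𝔥 on 𝔪, i.e. {v ∈ 𝔪 : ⁅w,v⁆ = 0 for all w ∈ 𝔥} = 𝔪₀. -/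

import Mathlib

/-- The fixed-point set of the adjoint action of `𝔥` inside a submodule `N`. -/
def fixedIn {L : Type*} [LieRing L] [LieAlgebra ℝ L] (𝔥 N : Submodule ℝ L) :
    Submodule ℝ L where
  carrier := {v | v ∈ N ∧ ∀ w ∈ 𝔥, ⁅w, v⁆ = 0}
  add_mem' := fun ha hb => ⟨N.add_mem ha.1 hb.1, fun w hw => by
    rw [lie_add, ha.2 w hw, hb.2 w hw, add_zero]⟩
  zero_mem' := ⟨N.zero_mem, fun w _ => lie_zero w⟩
  smul_mem' := fun c v hv => ⟨N.smul_mem c hv.1, fun w hw => by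
    rw [lie_smul, hv.2 w hw, smul_zero]⟩

lemma mem_fixedIn {L : Type*} [LieRing L] [LieAlgebra ℝ L] (𝔥 N : Submodule ℝ L)
    (v : L) : v ∈ fixedIn 𝔥 N ↔ v ∈ N ∧ ∀ w ∈ 𝔥, ⁅w, v⁆ = 0 := Iff.rfl

/-- **`𝔪₀` is the fixed-point set of `ad(𝔥)` on `𝔪`.**
With `𝔤, B, 𝔨, 𝔥, 𝔪₀, 𝔪′` as in the orthogonal reductive decomposition and
`𝔪 = 𝔪₀ ⊕ 𝔪′`, if `𝔪′` is a nonzero irreducible `𝔨`-module under the adjoint action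
and `𝔥` is not an ideal of `𝔤`, then `{v ∈ 𝔪 : ⁅w,v⁆ = 0 ∀ w ∈ 𝔥} = 𝔪₀`. -/
theorem m0_eq_fixed_point_set
    {L : Type*} [LieRing L] [LieAlgebra ℝ L] [FiniteDimensional ℝ L]
    (B : L →ₗ[ℝ] L →ₗ[ℝ] ℝ)
    (hBsymm : ∀ x y : L, B x y = B y x)
    (hBpos : ∀ x : L, x ≠ 0 → 0 < B x x)
    (hBinv : ∀ x y z : L, B ⁅z, x⁆ y + B x ⁅z, y⁆ = 0)
    (𝔨 : Submodule ℝ L) (h𝔨 : ∀ x ∈ 𝔨, ∀ y ∈ 𝔨, ⁅x, y⁆ ∈ 𝔨)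
    (𝔥 : Submodule ℝ L) (h𝔥𝔨 : 𝔥 ≤ 𝔨)
    (h𝔥ideal : ∀ x ∈ 𝔨, ∀ y ∈ 𝔥, ⁅x, y⁆ ∈ 𝔥)
    (𝔪₀ : Submodule ℝ L)
    (h𝔪₀ : ∀ v : L, v ∈ 𝔪₀ ↔ v ∈ 𝔨 ∧ ∀ w ∈ 𝔥, B v w = 0)
    (𝔪' : Submodule ℝ L)
    (h𝔪' : ∀ v : L, v ∈ 𝔪' ↔ ∀ w ∈ 𝔨, B v w = 0)
    (𝔪 : Submodule ℝ L) (h𝔪 : 𝔪 = 𝔪₀ ⊔ 𝔪')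
    (h𝔪'ne : 𝔪' ≠ ⊥)
    (h𝔪'irr : ∀ W : Submodule ℝ L, W ≤ 𝔪' →
      (∀ x ∈ 𝔨, ∀ v ∈ W, ⁅x, v⁆ ∈ W) → W = ⊥ ∨ W = 𝔪')
    (h𝔥notideal : ¬ (∀ x : L, ∀ v ∈ 𝔥, ⁅x, v⁆ ∈ 𝔥)) :
    ∀ v : L, (v ∈ 𝔪 ∧ ∀ w ∈ 𝔥, ⁅w, v⁆ = 0) ↔ v ∈ 𝔪₀ := by
  -- Step A: `ad(𝔥)` kills `𝔪₀`.
  have stepA : ∀ w ∈ 𝔥, ∀ v ∈ 𝔪₀, ⁅w, v⁆ = 0 := by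
    intro w hw v hv
    obtain ⟨hvk, hvB⟩ := (h𝔪₀ v).1 hv
    have hb : ⁅w, v⁆ ∈ 𝔥 := by
      have h1 : ⁅v, w⁆ ∈ 𝔥 := h𝔥ideal v hvk w hw
      have h2 : ⁅w, v⁆ = -⁅v, w⁆ := lie_skew w v ▸ rfl
      rw [h2]; exact 𝔥.neg_mem h1
    by_contra hne
    have hpos := hBpos _ hne
    have hin : ⁅w, ⁅w, v⁆⁆ ∈ 𝔥 := h𝔥ideal w (h𝔥𝔨 hw) _ hb
    have h0 : B v ⁅w, ⁅w, v⁆⁆ = 0 := hvB _ hin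
    have := hBinv v ⁅w, v⁆ w
    linarith
  -- `L = 𝔨 ⊔ 𝔪'`.
  have hrefl : B.IsRefl := fun x y h => by rw [hBsymm]; exact h
  have hnd : (LinearMap.BilinForm.restrict B 𝔨).Nondegenerate := by
    constructor <;> intro m hm
    all_goals
      by_contra hmne
      have : (m : L) ≠ 0 := fun h => hmne (Subtype.ext h)
      have := hBpos _ this
      have := hm m
      simp only [LinearMap.BilinForm.restrict_apply, LinearMap.domRestrict_apply] at this
      linarith
  have horth : LinearMap.BilinForm.orthogonal B 𝔨 = 𝔪' := by
    ext v
    rw [LinearMap.BilinForm.mem_orthogonal_iff, h𝔪']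
    constructor
    · intro h w hw; rw [hBsymm]; exact h w hw
    · intro h w hw; show B w v = 0; rw [hBsymm]; exact h w hw
  have hsup : 𝔨 ⊔ 𝔪' = ⊤ := by
    rw [← horth]
    exact (LinearMap.BilinForm.isCompl_orthogonal_of_restrict_nondegenerate
      hrefl hnd).sup_eq_top
  -- The fixed points of `ad 𝔥` in `𝔪'` form a `𝔨`-submodule of `𝔪'`.
  set F : Submodule ℝ L := fixedIn 𝔥 𝔪' with hF
  have hFle : F ≤ 𝔪' := fun v hv => hv.1
  have hFinv : ∀ x ∈ 𝔨, ∀ v ∈ F, ⁅x, v⁆ ∈ F := by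
    intro x hx v hv
    obtain ⟨hv1, hv2⟩ := hv
    refine ⟨?_, ?_⟩
    · rw [h𝔪']
      intro w hw
      have := hBinv v w x
      have h0 : B v ⁅x, w⁆ = 0 := (h𝔪' v).1 hv1 _ (h𝔨 x hx w hw)
      linarith
    · intro w hw
      have hleib : ⁅w, ⁅x, v⁆⁆ = ⁅⁅w, x⁆, v⁆ + ⁅x, ⁅w, v⁆⁆ := leibniz_lie w x v
      have hwx : ⁅w, x⁆ ∈ 𝔥 := by
        have h1 : ⁅x, w⁆ ∈ 𝔥 := h𝔥ideal x hx w hw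
        have h2 : ⁅w, x⁆ = -⁅x, w⁆ := lie_skew w x ▸ rfl
        rw [h2]; exact 𝔥.neg_mem h1
      rw [hleib, hv2 w hw, lie_zero, add_zero, hv2 _ hwx]
  rcases h𝔪'irr F hFle hFinv with hFbot | hFtop
  · -- `F = ⊥`: the desired equivalence.
    intro v
    constructor
    · rintro ⟨hvm, hfix⟩
      rw [h𝔪] at hvm
      obtain ⟨a, ha, b, hb, hab⟩ := Submodule.mem_sup.1 hvm
      have hbF : b ∈ F := by
        refine ⟨hb, fun w hw => ?_⟩
        have : ⁅w, v⁆ = ⁅w, a⁆ + ⁅w, b⁆ := by rw [← lie_add, hab]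
        have ha0 : ⁅w, a⁆ = 0 := stepA w hw a ha
        have hv0 : ⁅w, v⁆ = 0 := hfix w hw
        rw [hv0, ha0, zero_add] at this
        exact this.symm
      rw [hFbot] at hbF
      have : b = 0 := hbF
      rw [← hab, this, add_zero]
      exact ha
    · intro hv
      exact ⟨h𝔪 ▸ Submodule.mem_sup_left hv, fun w hw => stepA w hw v hv⟩
  · -- `F = 𝔪'` contradicts `𝔥` not being an ideal of `L`.
    exfalso
    apply h𝔥notideal
    intro x u hu
    have hx : x ∈ 𝔨 ⊔ 𝔪' := hsup ▸ Submodule.mem_top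
    obtain ⟨k, hk, m, hm, hkm⟩ := Submodule.mem_sup.1 hx
    have hmF : m ∈ F := hFtop ▸ hm
    have hmu : ⁅m, u⁆ = 0 := by
      have h1 : ⁅u, m⁆ = 0 := hmF.2 u hu
      have h2 : ⁅m, u⁆ = -⁅u, m⁆ := lie_skew m u ▸ rfl
      rw [h2, h1, neg_zero]
    have : ⁅x, u⁆ = ⁅k, u⁆ + ⁅m, u⁆ := by rw [← add_lie, hkm]
    rw [this, hmu, add_zero]
    exact h𝔥ideal k hk u hu
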